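/- (Gale transform in the case m₁ = m₂ = m₃) Assume m₁ = m₂ = m₃. Define β₁ : S → ℝ by β₁(u) = 1 for u ∈ V₁, β₁(u) = −1 for u ∈ V₂, β₁(u) = 0 for u ∈ V₃, and β₂ : S → ℝ by β₂(u) = 1 for u ∈ V₁, β₂(u) = 0 for u ∈ V₂, β₂(u) = −1 for u ∈ V₃. Then the vector space of all functions c : S → ℝ satisfying Σ_{u∈S} c(u) = 0 and Σ_{u∈S} c(u)·u = 0 is 2-dimensional and is spanned by β₁ and β₂. -/

import Mathlib

theorem stmt_5
    (n : ℕ) (hn : 0 < n)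
    (S V1 V2 V3 : Finset (Fin (2 * n) → ℝ))
    (h01 : ∀ v ∈ S, ∀ i, v i = 0 ∨ v i = 1)
    (hScard : S.card = n + 2)
    (hunion : V1 ∪ V2 ∪ V3 = S)
    (hd12 : Disjoint V1 V2) (hd13 : Disjoint V1 V3) (hd23 : Disjoint V2 V3)
    (hne1 : V1.Nonempty) (hne2 : V2.Nonempty) (hne3 : V3.Nonempty)
    (hsum1 : ∑ v ∈ V1, v = fun _ => (1 : ℝ))
    (hsum2 : ∑ v ∈ V2, v = fun _ => (1 : ℝ))
    (hsum3 : ∑ v ∈ V3, v = fun _ => (1 : ℝ))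
    (hspan : Module.finrank ℝ (Submodule.span ℝ (S : Set (Fin (2 * n) → ℝ))) = n)
    (h12 : V1.card = V2.card) (h23 : V2.card = V3.card)
    : ∀ β₁ β₂ : (Fin (2 * n) → ℝ) → ℝ,
      (∀ u ∈ V1, β₁ u = 1) → (∀ u ∈ V2, β₁ u = -1) → (∀ u ∈ V3, β₁ u = 0) →
      (∀ u ∈ V1, β₂ u = 1) → (∀ u ∈ V2, β₂ u = 0) → (∀ u ∈ V3, β₂ u = -1) →
      ((∑ u ∈ S, β₁ u = 0 ∧ ∑ u ∈ S, β₁ u • u = 0) ∧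
        (∑ u ∈ S, β₂ u = 0 ∧ ∑ u ∈ S, β₂ u • u = 0) ∧
        (∀ s t : ℝ, (∀ u ∈ S, s * β₁ u + t * β₂ u = 0) → s = 0 ∧ t = 0) ∧
        (∀ c : (Fin (2 * n) → ℝ) → ℝ, ∑ u ∈ S, c u = 0 → ∑ u ∈ S, c u • u = 0 →
          ∃ s t : ℝ, ∀ u ∈ S, c u = s * β₁ u + t * β₂ u)) := by
  intro β₁ β₂ hb11 hb12 hb13 hb21 hb22 hb23
  have hd : Disjoint (V1 ∪ V2) V3 := Finset.disjoint_union_left.mpr ⟨hd13, hd23⟩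
  have hsub2 : V2 ⊆ S := by
    rw [← hunion]; intro x hx; simp [Finset.mem_union, hx]
  have hsub3 : V3 ⊆ S := by
    rw [← hunion]; intro x hx; simp [Finset.mem_union, hx]
  -- the four sum identities
  have hb1sum : ∑ u ∈ S, β₁ u = 0 := by
    rw [← hunion, Finset.sum_union hd, Finset.sum_union hd12,
        Finset.sum_congr rfl hb11, Finset.sum_congr rfl hb12, Finset.sum_congr rfl hb13]
    simp [h12]
  have hb2sum : ∑ u ∈ S, β₂ u = 0 := by
    rw [← hunion, Finset.sum_union hd, Finset.sum_union hd12,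
        Finset.sum_congr rfl hb21, Finset.sum_congr rfl hb22, Finset.sum_congr rfl hb23]
    simp [h12, h23]
  have hb1vec : ∑ u ∈ S, β₁ u • u = 0 := by
    rw [← hunion, Finset.sum_union hd, Finset.sum_union hd12]
    have e1 : ∑ u ∈ V1, β₁ u • u = ∑ u ∈ V1, u :=
      Finset.sum_congr rfl fun u hu => by rw [hb11 u hu, one_smul]
    have e2 : ∑ u ∈ V2, β₁ u • u = -∑ u ∈ V2, u := by
      rw [← Finset.sum_neg_distrib]
      exact Finset.sum_congr rfl fun u hu => by rw [hb12 u hu]; simp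
    have e3 : ∑ u ∈ V3, β₁ u • u = 0 :=
      Finset.sum_eq_zero fun u hu => by rw [hb13 u hu, zero_smul]
    rw [e1, e2, e3, hsum1, hsum2]
    simp
  have hb2vec : ∑ u ∈ S, β₂ u • u = 0 := by
    rw [← hunion, Finset.sum_union hd, Finset.sum_union hd12]
    have e1 : ∑ u ∈ V1, β₂ u • u = ∑ u ∈ V1, u :=
      Finset.sum_congr rfl fun u hu => by rw [hb21 u hu, one_smul]
    have e2 : ∑ u ∈ V2, β₂ u • u = 0 :=
      Finset.sum_eq_zero fun u hu => by rw [hb22 u hu, zero_smul]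
    have e3 : ∑ u ∈ V3, β₂ u • u = -∑ u ∈ V3, u := by
      rw [← Finset.sum_neg_distrib]
      exact Finset.sum_congr rfl fun u hu => by rw [hb23 u hu]; simp
    rw [e1, e2, e3, hsum1, hsum3]
    simp
  -- linear independence of the restrictions (third conjunct)
  have hindep : ∀ s t : ℝ, (∀ u ∈ S, s * β₁ u + t * β₂ u = 0) → s = 0 ∧ t = 0 := by
    intro s t h
    obtain ⟨u2, hu2⟩ := hne2
    obtain ⟨u3, hu3⟩ := hne3
    have e2 := h u2 (hsub2 hu2)
    have e3 := h u3 (hsub3 hu3)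
    rw [hb12 u2 hu2, hb22 u2 hu2] at e2
    rw [hb13 u3 hu3, hb23 u3 hu3] at e3
    constructor <;> nlinarith [e2, e3]
  refine ⟨⟨hb1sum, hb1vec⟩, ⟨hb2sum, hb2vec⟩, hindep, ?_⟩
  -- the dependence space: kernel of the linear-combination map
  set φ : (↥S → ℝ) →ₗ[ℝ] (Fin (2 * n) → ℝ) :=
    Fintype.linearCombination ℝ (fun u : ↥S => (u : Fin (2 * n) → ℝ)) with hφ
  have hrange : LinearMap.range φ = Submodule.span ℝ (S : Set (Fin (2 * n) → ℝ)) := by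
    rw [hφ, Fintype.range_linearCombination]
    congr 1
    simp [Subtype.range_coe]
  have hdom : Module.finrank ℝ (↥S → ℝ) = n + 2 := by
    rw [Module.finrank_fintype_fun_eq_card, Fintype.card_coe, hScard]
  have hker : Module.finrank ℝ (LinearMap.ker φ) = 2 := by
    have h := LinearMap.finrank_range_add_finrank_ker φ
    rw [hrange, hspan, hdom] at h
    omega
  -- the two restrictions as elements of the kernel
  have hmemker : ∀ β : (Fin (2 * n) → ℝ) → ℝ, ∑ u ∈ S, β u • u = 0 →
      (fun u : ↥S => β u) ∈ LinearMap.ker φ := by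
    intro β hβ
    rw [LinearMap.mem_ker, hφ, Fintype.linearCombination_apply]
    rw [Finset.sum_coe_sort S (fun u => β u • u)]
    exact hβ
  set x : LinearMap.ker φ := ⟨fun u : ↥S => β₁ u, hmemker β₁ hb1vec⟩ with hx
  set y : LinearMap.ker φ := ⟨fun u : ↥S => β₂ u, hmemker β₂ hb2vec⟩ with hy
  have hli : LinearIndependent ℝ ![x, y] := by
    rw [LinearIndependent.pair_iff]
    intro s t hst
    apply hindep s t
    intro u hu
    have := congrArg Subtype.val hst
    have h2 := congrFun this ⟨u, hu⟩
    simpa [hx, hy, mul_comm] using h2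
  have hspan2 : Submodule.span ℝ (Set.range ![x, y]) = ⊤ := by
    apply hli.span_eq_top_of_card_eq_finrank
    rw [hker]; simp
  have hrangepair : Set.range ![x, y] = {x, y} := by
    ext z
    simp [Matrix.range_cons, Matrix.range_empty]
    tauto
  intro c hc0 hcvec
  have hcmem : (⟨fun u : ↥S => c u, hmemker c hcvec⟩ : LinearMap.ker φ) ∈
      Submodule.span ℝ ({x, y} : Set (LinearMap.ker φ)) := by
    rw [← hrangepair, hspan2]; trivial
  obtain ⟨s, t, hst⟩ := Submodule.mem_span_pair.mp hcmem
  refine ⟨s, t, fun u hu => ?_⟩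
  have := congrArg Subtype.val hst
  have h2 := congrFun this ⟨u, hu⟩
  simpa [hx, hy, mul_comm] using h2.symm
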